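/- Let a, b, â, b̂ ∈ ℝ and ε ≥ 0 satisfy |â − a| ≤ ε, |b̂ − b| ≤ ε, and a + b ≥ 0. Define (p̂, q̂) = (â/(â + b̂), b̂/(â + b̂)) if â > 0 and b̂ > 0; (p̂, q̂) = (1, 0) if â > 0 and b̂ ≤ 0; and (p̂, q̂) = (0, 1) if â ≤ 0. Then max(p̂·b, q̂·a) − (p̂·a + q̂·b)/2 ≤ (3/2)·ε. -/

import Mathlib

theorem double_greedy_step_robust (a b ah bh ε : ℝ) (hε : 0 ≤ ε)
    (ha : |ah - a| ≤ ε) (hb : |bh - b| ≤ ε) (hab : a + b ≥ 0) :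
    (let p : ℝ := if 0 < ah then (if 0 < bh then ah / (ah + bh) else 1) else 0
     let q : ℝ := if 0 < ah then (if 0 < bh then bh / (ah + bh) else 0) else 1
     max (p * b) (q * a) - (p * a + q * b) / 2) ≤ (3 / 2) * ε := by
  rw [abs_le] at ha hb
  obtain ⟨ha1, ha2⟩ := ha
  obtain ⟨hb1, hb2⟩ := hb
  by_cases hah : 0 < ah
  · by_cases hbh : 0 < bh
    · simp only [if_pos hah, if_pos hbh]
      have hs : (0:ℝ) < ah + bh := by linarith
      have e1 : ah / (ah + bh) * b = (ah * b) / (ah + bh) := by ring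
      have e2 : bh / (ah + bh) * a = (bh * a) / (ah + bh) := by ring
      have e3 : (ah / (ah + bh) * a + bh / (ah + bh) * b) / 2
          = (ah * a + bh * b) / 2 / (ah + bh) := by
        rw [div_mul_eq_mul_div, div_mul_eq_mul_div, ← add_div, div_div, div_div,
          mul_comm (ah + bh) 2]
      rw [e1, e2, e3, max_div_div_right hs.le, div_sub_div_same,
        div_le_iff₀ hs, sub_le_iff_le_add, max_le_iff]
      constructor
      · nlinarith [sq_nonneg (a - b), mul_pos hah hbh,
          mul_nonneg (by linarith : (0:ℝ) ≤ ah - a + ε) hbh.le,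
          mul_nonneg (by linarith : (0:ℝ) ≤ ε - (ah - a)) hbh.le,
          mul_nonneg (by linarith : (0:ℝ) ≤ bh - b + ε) hah.le,
          mul_nonneg (by linarith : (0:ℝ) ≤ ε - (bh - b)) hah.le,
          mul_nonneg (by linarith : (0:ℝ) ≤ ah - a + ε) (by linarith : (0:ℝ) ≤ ε - (ah - a)),
          mul_nonneg (by linarith : (0:ℝ) ≤ bh - b + ε) (by linarith : (0:ℝ) ≤ ε - (bh - b)),
          mul_nonneg (by linarith : (0:ℝ) ≤ ah - a + ε) (by linarith : (0:ℝ) ≤ ε - (bh - b)),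
          mul_nonneg (by linarith : (0:ℝ) ≤ bh - b + ε) (by linarith : (0:ℝ) ≤ ε - (ah - a)),
          mul_nonneg hε hab.le, sq_nonneg (ah - bh), sq_nonneg (ε + bh - b), sq_nonneg (ε + ah - a)]
      · nlinarith [sq_nonneg (a - b), mul_pos hah hbh,
          mul_nonneg (by linarith : (0:ℝ) ≤ ah - a + ε) hbh.le,
          mul_nonneg (by linarith : (0:ℝ) ≤ ε - (ah - a)) hbh.le,
          mul_nonneg (by linarith : (0:ℝ) ≤ bh - b + ε) hah.le,
          mul_nonneg (by linarith : (0:ℝ) ≤ ε - (bh - b)) hah.le,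
          mul_nonneg (by linarith : (0:ℝ) ≤ ah - a + ε) (by linarith : (0:ℝ) ≤ ε - (ah - a)),
          mul_nonneg (by linarith : (0:ℝ) ≤ bh - b + ε) (by linarith : (0:ℝ) ≤ ε - (bh - b)),
          mul_nonneg (by linarith : (0:ℝ) ≤ ah - a + ε) (by linarith : (0:ℝ) ≤ ε - (bh - b)),
          mul_nonneg (by linarith : (0:ℝ) ≤ bh - b + ε) (by linarith : (0:ℝ) ≤ ε - (ah - a)),
          mul_nonneg hε hab.le, sq_nonneg (ah - bh), sq_nonneg (ε + bh - b), sq_nonneg (ε + ah - a)]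
    · simp only [if_pos hah, if_neg hbh]
      push_neg at hbh
      have hble : b ≤ ε := by linarith
      rcases le_or_gt b 0 with h | h
      · simp only [one_mul, zero_mul]
        rw [max_eq_right h]
        nlinarith
      · simp only [one_mul, zero_mul]
        rw [max_eq_left h.le]
        nlinarith
  · simp only [if_neg hah]
    push_neg at hah
    have hale : a ≤ ε := by linarith
    rcases le_or_gt a 0 with h | h
    · simp only [one_mul, zero_mul]
      rw [max_eq_left h]
      nlinarith
    · simp only [one_mul, zero_mul]
      rw [max_eq_right h.le]
      nlinarith
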